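/- Let E be a trace-preserving completely positive map on M_n(ℂ) with a positive definite fixed point. Then the set Fix(E†) = {X : E†(X) = X} is a *-subalgebra of M_n(ℂ): it is a linear subspace closed under matrix multiplication and Hermitian conjugation, and contains the identity. -/

import Mathlib

open Matrix
open scoped ComplexOrder

lemma trace_mul_conjTranspose_self_nonneg {m : ℕ} (N : Matrix (Fin m) (Fin m) ℂ) :
    0 ≤ (N * Nᴴ).trace := by
  rw [Matrix.trace]
  refine Finset.sum_nonneg fun i _ => ?_
  have : (N * Nᴴ).diag i = dotProduct (N i) (star (N i)) := by
    simp [Matrix.diag, Matrix.mul_apply, Matrix.conjTranspose_apply, dotProduct]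
  rw [this]
  exact dotProduct_self_star_nonneg (N i)

lemma trace_mul_conjTranspose_self_eq_zero {m : ℕ} {N : Matrix (Fin m) (Fin m) ℂ}
    (h : (N * Nᴴ).trace = 0) : N = 0 := by
  rw [Matrix.trace] at h
  have hd : ∀ i, (N * Nᴴ).diag i = dotProduct (N i) (star (N i)) := fun i => by
    simp [Matrix.diag, Matrix.mul_apply, Matrix.conjTranspose_apply, dotProduct]
  have h0 : ∀ i ∈ Finset.univ, (N * Nᴴ).diag i = 0 := by
    rw [← Finset.sum_eq_zero_iff_of_nonneg (fun i _ => by rw [hd]; exact dotProduct_self_star_nonneg (N i))]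
    exact h
  ext i j
  have := h0 i (Finset.mem_univ i)
  rw [hd] at this
  have := dotProduct_self_star_eq_zero.mp this
  simp [congr_fun this j]

lemma trace_sum_pull {m k : ℕ} (A : Fin k → Matrix (Fin m) (Fin m) ℂ)
    (Z : Matrix (Fin m) (Fin m) ℂ) :
    ∑ i, (A i * Z).trace = ((∑ i, A i) * Z).trace := by
  rw [Finset.sum_mul, Matrix.trace_sum]

lemma key_comm {n k : ℕ}
    (K : Fin k → Matrix (Fin n) (Fin n) ℂ)
    (hTP : ∑ i, (K i)ᴴ * K i = 1)
    (ρ₀ : Matrix (Fin n) (Fin n) ℂ) (hρ₀ : ρ₀.PosDef)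
    (hfix : ∑ i, K i * ρ₀ * (K i)ᴴ = ρ₀)
    (X : Matrix (Fin n) (Fin n) ℂ)
    (hX : ∑ i, (K i)ᴴ * X * K i = X) :
    ∀ i, K i * X = X * K i := by
  have hXs : ∑ i, (K i)ᴴ * Xᴴ * K i = Xᴴ := by
    have := congrArg conjTranspose hX
    rw [Matrix.conjTranspose_sum] at this
    simpa [Matrix.conjTranspose_mul, Matrix.mul_assoc] using this
  set M : Fin k → Matrix (Fin n) (Fin n) ℂ := fun i => K i * X - X * K i with hM
  -- big trace computation
  have t1 : ∑ i, (K i * X * ρ₀ * Xᴴ * (K i)ᴴ).trace = (X * ρ₀ * Xᴴ).trace := by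
    have : ∀ i, (K i * X * ρ₀ * Xᴴ * (K i)ᴴ).trace
        = ((K i)ᴴ * K i * (X * ρ₀ * Xᴴ)).trace := fun i => by
      rw [show K i * X * ρ₀ * Xᴴ * (K i)ᴴ = (K i * (X * ρ₀ * Xᴴ)) * (K i)ᴴ by
        simp [Matrix.mul_assoc]]
      rw [Matrix.trace_mul_comm, ← Matrix.mul_assoc]
    simp_rw [this]
    rw [trace_sum_pull, hTP, Matrix.one_mul]
  have t2 : ∑ i, (K i * X * ρ₀ * ((K i)ᴴ * Xᴴ)).trace = (Xᴴ * (X * ρ₀)).trace := by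
    have : ∀ i, (K i * X * ρ₀ * ((K i)ᴴ * Xᴴ)).trace
        = (((K i)ᴴ * Xᴴ * K i) * (X * ρ₀)).trace := fun i => by
      rw [Matrix.trace_mul_comm]
      simp [Matrix.mul_assoc]
    simp_rw [this]
    rw [trace_sum_pull, hXs]
  have t3 : ∑ i, (X * K i * ρ₀ * (Xᴴ * (K i)ᴴ)).trace = (X * (ρ₀ * Xᴴ)).trace := by
    have : ∀ i, (X * K i * ρ₀ * (Xᴴ * (K i)ᴴ)).trace
        = (((K i)ᴴ * X * K i) * (ρ₀ * Xᴴ)).trace := fun i => by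
      rw [show X * K i * ρ₀ * (Xᴴ * (K i)ᴴ) = (X * (K i * ρ₀ * Xᴴ)) * (K i)ᴴ by
        simp [Matrix.mul_assoc]]
      rw [Matrix.trace_mul_comm]
      simp [Matrix.mul_assoc]
    simp_rw [this]
    rw [trace_sum_pull, hX]
  have t4 : ∑ i, (X * (K i * ρ₀ * (K i)ᴴ) * Xᴴ).trace = (X * ρ₀ * Xᴴ).trace := by
    rw [← Matrix.trace_sum, ← Finset.sum_mul, ← Finset.mul_sum, hfix]
  have htr : ∑ i, (M i * ρ₀ * (M i)ᴴ).trace = 0 := by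
    have expand : ∀ i, M i * ρ₀ * (M i)ᴴ
        = K i * X * ρ₀ * (Xᴴ * (K i)ᴴ) - K i * X * ρ₀ * ((K i)ᴴ * Xᴴ)
          - X * K i * ρ₀ * (Xᴴ * (K i)ᴴ) + X * (K i * ρ₀ * (K i)ᴴ) * Xᴴ := fun i => by
      simp only [hM, Matrix.conjTranspose_sub, Matrix.conjTranspose_mul]
      noncomm_ring
    simp_rw [expand]
    simp only [Matrix.trace_add, Matrix.trace_sub, Finset.sum_add_distrib,
      Finset.sum_sub_distrib]
    rw [t2, t3, t4]
    have e1 : ∑ i, (K i * X * ρ₀ * (Xᴴ * (K i)ᴴ)).trace = (X * ρ₀ * Xᴴ).trace := by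
      rw [← t1]; congr 1; ext i; congr 1; simp [Matrix.mul_assoc]
    rw [e1]
    rw [Matrix.trace_mul_comm Xᴴ (X * ρ₀)]
    simp [Matrix.mul_assoc]
  -- conclude each M i = 0
  obtain ⟨B, hB⟩ : ∃ B : Matrix (Fin n) (Fin n) ℂ, ρ₀ = Bᴴ * B := by
    open scoped MatrixOrder in exact CStarAlgebra.nonneg_iff_eq_star_mul_self.mp hρ₀.posSemidef.nonneg
  have hMB : ∀ i, M i * ρ₀ * (M i)ᴴ = (M i * Bᴴ) * (M i * Bᴴ)ᴴ := fun i => by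
    rw [hB, Matrix.conjTranspose_mul, Matrix.conjTranspose_conjTranspose]
    simp [Matrix.mul_assoc]
  have hzero : ∀ i ∈ Finset.univ, (M i * ρ₀ * (M i)ᴴ).trace = 0 := by
    rw [← Finset.sum_eq_zero_iff_of_nonneg (fun i _ => by
      rw [hMB i]; exact trace_mul_conjTranspose_self_nonneg _)]
    exact htr
  intro i
  have hNB : M i * Bᴴ = 0 := by
    apply trace_mul_conjTranspose_self_eq_zero
    rw [← hMB i]; exact hzero i (Finset.mem_univ i)
  have hMρ : M i * ρ₀ = 0 := by
    rw [hB, ← Matrix.mul_assoc, hNB, Matrix.zero_mul]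
  have : M i = 0 := by
    have hdet : IsUnit ρ₀.det := hρ₀.det_pos.ne'.isUnit
    have := congrArg (· * ρ₀⁻¹) hMρ
    simpa [Matrix.mul_assoc, Matrix.mul_nonsing_inv ρ₀ hdet] using this
  have := sub_eq_zero.mp this
  exact this
/-- For a CPTP map `E(ρ) = Σᵢ Kᵢ ρ Kᵢᴴ` with a positive definite fixed point,
the fixed-point set of the adjoint map `E†(X) = Σᵢ Kᵢᴴ X Kᵢ` is a
*-subalgebra of the matrix algebra: it contains the identity and is closed
under addition, scalar multiplication, multiplication and conjugate
transposition. -/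
theorem fix_adjoint_is_star_subalgebra {n k : ℕ}
    (K : Fin k → Matrix (Fin n) (Fin n) ℂ)
    (hTP : ∑ i, (K i)ᴴ * K i = 1)
    (ρ₀ : Matrix (Fin n) (Fin n) ℂ) (hρ₀ : ρ₀.PosDef)
    (hfix : ∑ i, K i * ρ₀ * (K i)ᴴ = ρ₀) :
    (∑ i, (K i)ᴴ * (1 : Matrix (Fin n) (Fin n) ℂ) * K i = 1) ∧
    (∀ X Y : Matrix (Fin n) (Fin n) ℂ,
      (∑ i, (K i)ᴴ * X * K i = X) → (∑ i, (K i)ᴴ * Y * K i = Y) →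
      ∑ i, (K i)ᴴ * (X + Y) * K i = X + Y) ∧
    (∀ (c : ℂ) (X : Matrix (Fin n) (Fin n) ℂ),
      (∑ i, (K i)ᴴ * X * K i = X) →
      ∑ i, (K i)ᴴ * (c • X) * K i = c • X) ∧
    (∀ X Y : Matrix (Fin n) (Fin n) ℂ,
      (∑ i, (K i)ᴴ * X * K i = X) → (∑ i, (K i)ᴴ * Y * K i = Y) →
      ∑ i, (K i)ᴴ * (X * Y) * K i = X * Y) ∧
    (∀ X : Matrix (Fin n) (Fin n) ℂ,
      (∑ i, (K i)ᴴ * X * K i = X) →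
      ∑ i, (K i)ᴴ * Xᴴ * K i = Xᴴ) := by
  refine ⟨by simpa [Matrix.mul_one] using hTP, ?_, ?_, ?_, ?_⟩
  · intro X Y hX hY
    simp only [Matrix.mul_add, Matrix.add_mul, Finset.sum_add_distrib, hX, hY]
  · intro c X hX
    simp only [Matrix.mul_smul, Matrix.smul_mul, ← Finset.smul_sum, hX]
  · intro X Y hX hY
    have hc := key_comm K hTP ρ₀ hρ₀ hfix Y hY
    have : ∀ i, (K i)ᴴ * (X * Y) * K i = ((K i)ᴴ * X * K i) * Y := fun i => by
      rw [show (K i)ᴴ * (X * Y) * K i = (K i)ᴴ * X * (Y * K i) by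
        simp [Matrix.mul_assoc], ← hc i]
      simp [Matrix.mul_assoc]
    simp_rw [this]
    rw [← Finset.sum_mul, hX]
  · intro X hX
    have hc := key_comm K hTP ρ₀ hρ₀ hfix X hX
    have hcs : ∀ i, (K i)ᴴ * Xᴴ = Xᴴ * (K i)ᴴ := fun i => by
      have := congrArg conjTranspose (hc i)
      simpa [Matrix.conjTranspose_mul] using this.symm
    have : ∀ i, (K i)ᴴ * Xᴴ * K i = Xᴴ * ((K i)ᴴ * K i) := fun i => by
      rw [hcs i, Matrix.mul_assoc]
    simp_rw [this]
    rw [← Finset.mul_sum, hTP, Matrix.mul_one]
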